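/- Let γₙ → γ in the metric space (C_f, ψ) of finite parameterized curves in ℝ³, and let 0 ≤ a < b < T(γ). Then for all sufficiently large n, the restriction γₙ|_{[a,b]} is defined, and the restrictions γₙ|_{[a,b]} converge to γ|_{[a,b]} in (C_f, ψ), where the restriction of a curve γ to [a,b] is the curve t ↦ γ(t+a) of duration b−a. -/

import Mathlib

open Filter Set

noncomputable section

/-- A finite-duration parameterized curve in `ℝ³`: a continuous function together with
its duration `T ≥ 0` (only the values on `[0, T]` are relevant). -/
structure FiniteCurve where
  T : ℝ
  hT : 0 ≤ T
  toFun : ℝ → EuclideanSpace ℝ (Fin 3)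
  cont : Continuous toFun

/-- The metric `ψ` on the space `C_f` of finite parameterized curves:
`ψ(γ₁,γ₂) = |T₁ − T₂| + max_{0 ≤ s ≤ 1} |γ₁(sT₁) − γ₂(sT₂)|`. -/
noncomputable def psiDist (γ₁ γ₂ : FiniteCurve) : ℝ :=
  |γ₁.T - γ₂.T| +
    ⨆ s : Set.Icc (0 : ℝ) 1, dist (γ₁.toFun ((s : ℝ) * γ₁.T)) (γ₂.toFun ((s : ℝ) * γ₂.T))

/-- The restriction of a curve `γ` to `[a,b]`: the curve `t ↦ γ(t + a)` of duration `b − a`. -/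
noncomputable def FiniteCurve.restrictTo (γ : FiniteCurve) (a b : ℝ) (hab : a ≤ b) :
    FiniteCurve where
  T := b - a
  hT := by linarith
  toFun := fun t => γ.toFun (t + a)
  cont := γ.cont.comp (continuous_id.add continuous_const)

/-- The sup part of `psiDist`. -/
noncomputable def supD (γ₁ γ₂ : FiniteCurve) : ℝ :=
  ⨆ s : Set.Icc (0 : ℝ) 1, dist (γ₁.toFun ((s : ℝ) * γ₁.T)) (γ₂.toFun ((s : ℝ) * γ₂.T))

lemma supD_nonneg (γ₁ γ₂ : FiniteCurve) : 0 ≤ supD γ₁ γ₂ :=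
  Real.iSup_nonneg fun _ => dist_nonneg

lemma dist_le_supD (γ₁ γ₂ : FiniteCurve) (s : Set.Icc (0 : ℝ) 1) :
    dist (γ₁.toFun ((s : ℝ) * γ₁.T)) (γ₂.toFun ((s : ℝ) * γ₂.T)) ≤ supD γ₁ γ₂ := by
  have hc : Continuous fun s : Set.Icc (0:ℝ) 1 =>
      dist (γ₁.toFun ((s : ℝ) * γ₁.T)) (γ₂.toFun ((s : ℝ) * γ₂.T)) :=
    Continuous.dist (γ₁.cont.comp (continuous_subtype_val.mul continuous_const))
      (γ₂.cont.comp (continuous_subtype_val.mul continuous_const))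
  exact le_ciSup (isCompact_range hc).bddAbove s

lemma psiDist_eq (γ₁ γ₂ : FiniteCurve) : psiDist γ₁ γ₂ = |γ₁.T - γ₂.T| + supD γ₁ γ₂ := rfl

/-- If `γₙ → γ` in `(C_f, ψ)` and `0 ≤ a < b < T(γ)`, then for all sufficiently
large `n` the restriction `γₙ|_{[a,b]}` is defined (i.e. `b < T(γₙ)`), and the restrictions
`γₙ|_{[a,b]}` converge to `γ|_{[a,b]}` in `(C_f, ψ)`. -/
theorem psi_tendsto_restrict (γn : ℕ → FiniteCurve) (γ : FiniteCurve) (a b : ℝ)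
    (ha : 0 ≤ a) (hab : a < b) (hb : b < γ.T)
    (h : Tendsto (fun n => psiDist (γn n) γ) atTop (nhds 0)) :
    (∀ᶠ n in atTop, b < (γn n).T) ∧
      Tendsto (fun n => psiDist ((γn n).restrictTo a b hab.le) (γ.restrictTo a b hab.le))
        atTop (nhds 0) := by
  -- basic consequences of h
  have habs : Tendsto (fun n => |(γn n).T - γ.T|) atTop (nhds 0) := by
    apply squeeze_zero (fun n => abs_nonneg _) (fun n => ?_) h
    rw [psiDist_eq]; linarith [supD_nonneg (γn n) γ]
  have hsup : Tendsto (fun n => supD (γn n) γ) atTop (nhds 0) := by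
    apply squeeze_zero (fun n => supD_nonneg _ _) (fun n => ?_) h
    rw [psiDist_eq]; linarith [abs_nonneg ((γn n).T - γ.T)]
  have hTn : Tendsto (fun n => (γn n).T) atTop (nhds γ.T) := by
    rw [tendsto_iff_dist_tendsto_zero]
    simpa [Real.dist_eq] using habs
  have hev : ∀ᶠ n in atTop, b < (γn n).T := hTn.eventually (eventually_gt_nhds hb)
  refine ⟨hev, ?_⟩
  -- uniform continuity of γ on a compact interval
  have hK : IsCompact (Icc (0:ℝ) (b + γ.T)) := isCompact_Icc
  have hUC : UniformContinuousOn γ.toFun (Icc (0:ℝ) (b + γ.T)) :=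
    hK.uniformContinuousOn_of_continuous γ.cont.continuousOn
  rw [Metric.tendsto_atTop]
  intro ε hε
  obtain ⟨δ, hδ, hδ'⟩ := Metric.uniformContinuousOn_iff.1 hUC (ε/4) (by linarith)
  have hev2 : ∀ᶠ n in atTop, |(γn n).T - γ.T| < δ :=
    habs.eventually (eventually_lt_nhds hδ)
  have hev3 : ∀ᶠ n in atTop, supD (γn n) γ < ε/4 :=
    hsup.eventually (eventually_lt_nhds (by linarith))
  obtain ⟨N, hN⟩ := (hev.and (hev2.and hev3)).exists_forall_of_atTop
  refine ⟨N, fun n hn => ?_⟩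
  obtain ⟨hbn, hdn, hsn⟩ := hN n hn
  have hTpos : 0 < (γn n).T := lt_of_le_of_lt (by linarith) hbn
  -- the restricted psiDist
  have key : ∀ s : Set.Icc (0:ℝ) 1,
      dist (((γn n).restrictTo a b hab.le).toFun ((s:ℝ) * ((γn n).restrictTo a b hab.le).T))
        ((γ.restrictTo a b hab.le).toFun ((s:ℝ) * (γ.restrictTo a b hab.le).T)) ≤ ε/2 := by
    rintro ⟨s, hs0, hs1⟩
    simp only [FiniteCurve.restrictTo]
    set t : ℝ := s * (b - a) + a with ht
    have hta : a ≤ t := by nlinarith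
    have htb : t ≤ b := by nlinarith
    have ht0 : 0 ≤ t := le_trans ha hta
    have hs' : t / (γn n).T ∈ Set.Icc (0:ℝ) 1 := by
      constructor
      · exact div_nonneg ht0 hTpos.le
      · rw [div_le_one hTpos]; linarith
    have hd := dist_le_supD (γn n) γ ⟨t / (γn n).T, hs'⟩
    have he1 : t / (γn n).T * (γn n).T = t := div_mul_cancel₀ t hTpos.ne'
    rw [he1] at hd
    set u : ℝ := t / (γn n).T * γ.T with hu
    have hsIcc : t / (γn n).T ≤ 1 := hs'.2
    have hs0' : 0 ≤ t / (γn n).T := hs'.1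
    have huK : u ∈ Icc (0:ℝ) (b + γ.T) := by
      constructor
      · exact mul_nonneg hs0' γ.hT
      · have : u ≤ γ.T := by nlinarith [γ.hT]
        linarith
    have htK : t ∈ Icc (0:ℝ) (b + γ.T) := ⟨ht0, by linarith [γ.hT]⟩
    have hut : dist u t < δ := by
      rw [Real.dist_eq]
      have : u - t = t / (γn n).T * (γ.T - (γn n).T) := by
        rw [hu, mul_sub, div_mul_cancel₀ t hTpos.ne']
      rw [this, abs_mul, abs_of_nonneg hs0']
      calc t / (γn n).T * |γ.T - (γn n).T| ≤ 1 * |γ.T - (γn n).T| := by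
            apply mul_le_mul_of_nonneg_right hsIcc (abs_nonneg _)
        _ = |(γn n).T - γ.T| := by rw [one_mul, abs_sub_comm]
        _ < δ := hdn
    have hγ : dist (γ.toFun u) (γ.toFun t) < ε/4 := hδ' u huK t htK hut
    calc dist ((γn n).toFun (s * (b - a) + a)) (γ.toFun (s * (b - a) + a))
        ≤ dist ((γn n).toFun t) (γ.toFun u) + dist (γ.toFun u) (γ.toFun t) := by
          rw [ht]; exact dist_triangle _ _ _
      _ ≤ supD (γn n) γ + dist (γ.toFun u) (γ.toFun t) := by linarith [hd]
      _ ≤ ε/4 + ε/4 := by linarith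
      _ = ε/2 := by ring
  have hDle : supD ((γn n).restrictTo a b hab.le) (γ.restrictTo a b hab.le) ≤ ε/2 :=
    ciSup_le key
  have : psiDist ((γn n).restrictTo a b hab.le) (γ.restrictTo a b hab.le)
      = supD ((γn n).restrictTo a b hab.le) (γ.restrictTo a b hab.le) := by
    rw [psiDist_eq]
    simp [FiniteCurve.restrictTo]
  rw [Real.dist_eq, sub_zero, this,
    abs_of_nonneg (supD_nonneg _ _)]
  linarith
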